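/- arXiv:1609.04288 — 2 statements merged into one kernel-verified Lean document; each statement's English description precedes it below -/
import Mathlib

section
/- For r = [m₁, m₂, …, m_k] with k ≥ 2 and m₂ ≥ 2, every term of the cyclic S-sequence CS(r) of the relator u_r is either m₁ or m₁+1, and no two consecutive terms both equal m₁+1. -/
/-- A letter in the free group on two generators `a = 0`, `b = 1`:
the generator together with the exponent sign (`true` = exponent `+1`). -/
abbrev Letter := Fin 2 × Bool

/-- A word in the generators `a±1, b±1`. -/
abbrev Word := List Letter

/-- Continued fraction `[m₁,…,m_k] = 1/(m₁ + 1/(m₂ + ⋯ + 1/m_k))`. -/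
def cf : List ℕ → ℚ
  | [] => 0
  | m :: rest => 1 / (m + cf rest)

/-- `ε_i = (-1)^⌊iq/p⌋`. -/
def eps (p q i : ℕ) : ℤ := (-1) ^ (i * q / p)

/-- The word `û_{q/p} = b^{ε₁} a^{ε₂} b^{ε₃} ⋯` (of length `p-1`) as a list of letters. -/
def hatList (p q : ℕ) : Word :=
  (List.range (p - 1)).map (fun j =>
    ((if (j + 1) % 2 = 1 then (1 : Fin 2) else 0), decide ((((j + 1) * q) / p) % 2 = 0)))

/-- The formal inverse of a word. -/
def invWord (w : Word) : Word := (w.map (fun x => (x.1, !x.2))).reverse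

/-- The 2-bridge relator word `u_{q/p}`: `a·û·b^{(-1)^q}·û⁻¹` for `p` odd, and
`a·û·a⁻¹·û⁻¹` for `p` even. -/
def uList (p q : ℕ) : Word :=
  ((0 : Fin 2), true) :: (hatList p q ++
    (if p % 2 = 1 then [((1 : Fin 2), decide (q % 2 = 0))] else [((0 : Fin 2), false)]) ++
    invWord (hatList p q))

/-- The relator word `u_r` of slope `r = q/p` (in lowest terms). -/
def slopeWord (r : ℚ) : Word := uList r.den r.num.toNat

/-- The slopes `r_0 = [4,3,3]`, `r_i = [4,2,(i-1)⟨3⟩,4,3]` for `i ≥ 1`. -/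
def rSlope : ℕ → ℚ
  | 0 => cf [4, 3, 3]
  | i + 1 => cf ([4, 2] ++ List.replicate i 3 ++ [4, 3])

/-- Run-lengths of a list of signs (auxiliary). -/
def runsAux : Bool → ℕ → List Bool → List ℕ
  | _, n, [] => [n]
  | s, n, x :: xs => if x = s then runsAux s (n + 1) xs else n :: runsAux x 1 xs

/-- The S-sequence of a word: the lengths of its maximal positive/negative blocks. -/
def Sseq (w : Word) : List ℕ :=
  match w.map Prod.snd with
  | [] => []
  | s :: xs => runsAux s 1 xs

/-- A word is reduced: no adjacent mutually inverse letters. -/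
def Reduced (w : Word) : Prop :=
  List.Chain' (fun u v => ¬(u.1 = v.1 ∧ u.2 ≠ v.2)) w

/-- A word is alternating: adjacent letters use different generators. -/
def Alternating (w : Word) : Prop := List.Chain' (fun u v => u.1 ≠ v.1) w

/-- Cyclically reduced: reduced including the wrap-around pair. -/
def CyclicallyReduced (w : Word) : Prop :=
  List.Chain' (fun u v => ¬(u.1 = v.1 ∧ u.2 ≠ v.2)) (w ++ w)

/-- Cyclically alternating: alternating including the wrap-around pair. -/
def CyclicallyAlternating (w : Word) : Prop :=
  List.Chain' (fun u v => u.1 ≠ v.1) (w ++ w)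

/-- The word starts at a block boundary of the cyclic word: either all signs agree,
or the first and last signs differ. -/
def StartsAtBoundary (w : Word) : Prop :=
  (∀ x ∈ w, ∀ y ∈ w, x.2 = y.2) ∨ (∀ x ∈ w.head?, ∀ y ∈ w.getLast?, x.2 ≠ y.2)

/-- `L` is a linear representative of the cyclic S-sequence `CS(w)`:
the S-sequence of some rotation of `w` starting at a block boundary. -/
def IsCSRep (w : Word) (L : List ℕ) : Prop :=
  ∃ n, StartsAtBoundary (w.rotate n) ∧ Sseq (w.rotate n) = L

/-- From a linear representative `L = (m+1, t₁⟨m⟩, m+1, t₂⟨m⟩, …)` of a CS-sequence,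
extract the CT-sequence `(t₁, t₂, …)` of run-lengths of `m`'s. -/
def ctOf (m : ℕ) (L : List ℕ) : List ℕ := ((L.splitOn (m + 1)).drop 1).map List.length

/-- The cyclic sequence represented by `L` contains `pat` as a contiguous subsequence. -/
def CyclicContains (L pat : List ℕ) : Prop := ∃ k, pat.isPrefixOf (L.rotate k)

/-- The number of (cyclic) occurrences of `pat` as a contiguous subsequence of
the cyclic sequence represented by `L`. -/
def cyclicCount (pat L : List ℕ) : ℕ :=
  ((List.range L.length).filter (fun k => pat.isPrefixOf (L.rotate k))).length

/-- `⟨⟨S₁, S₂, S₁, S₂⟩⟩` is the symmetric decomposition of the cyclic S-sequence of `w`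
(for a slope whose continued fraction starts with `m`): each `Sᵢ` is a palindrome,
`S₁` begins and ends with `m+1`, and `S₂` begins and ends with `m`. -/
def IsSymmDecomp (w : Word) (m : ℕ) (S1 S2 : List ℕ) : Prop :=
  IsCSRep w (S1 ++ S2 ++ S1 ++ S2) ∧ S1.reverse = S1 ∧ S2.reverse = S2 ∧
  (∀ x ∈ S1.head?, x = m + 1) ∧ (∀ x ∈ S1.getLast?, x = m + 1) ∧
  S2.head? = some m ∧ S2.getLast? = some m

/-- Expand a sequence of block lengths into the corresponding list of signs,
blocks alternating in sign starting with `s`. -/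
def signList : Bool → List ℕ → List Bool
  | _, [] => []
  | s, n :: rest => List.replicate n s ++ signList (!s) rest

/-- The alternating word with initial generator `g0`, initial sign `s0`,
and S-sequence `S`. -/
def altWord (g0 : Fin 2) (s0 : Bool) (S : List ℕ) : Word :=
  (List.range (signList s0 S).length).zipWith (fun (k : ℕ) s => ((g0 + (Fin.ofNat 2 k)), s))
    (signList s0 S)

/-- The product `w * w'` is freely reduced without cancellation at the junction. -/
def NoCancel (w w' : Word) : Prop :=
  ∀ x ∈ w.getLast?, ∀ y ∈ w'.head?, ¬(x.1 = y.1 ∧ x.2 ≠ y.2)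

/-- The word `X`: alternating, starting with `a`, with S-sequence `(4,4,4,5,4,4)`
(it ends with `a⁻¹`). -/
def Xword : Word := altWord 0 true [4, 4, 4, 5, 4, 4]

/-- The endomorphism of `F(a,b)` with `a ↦ X⁻¹`, `b ↦ b⁻¹`. -/
def fmap : FreeGroup (Fin 2) →* FreeGroup (Fin 2) :=
  FreeGroup.lift (fun i => if i = 0 then (FreeGroup.mk Xword)⁻¹ else (FreeGroup.of 1)⁻¹)

/-- The set of relators `{u_{r_i} : i ≥ 0}`. -/
def relsG : Set (FreeGroup (Fin 2)) := {x | ∃ i, x = FreeGroup.mk (slopeWord (rSlope i))}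

/-- The symmetrized set generated by the relators `u_{r_i}`: all cyclic permutations
of the `u_{r_i}` and of their inverses. -/
def Rset : Set Word :=
  {w | ∃ i n, w = (slopeWord (rSlope i)).rotate n ∨
      w = (invWord (slopeWord (rSlope i))).rotate n}
namespace CSaux

def Fl (h : ℕ → Bool) (i : ℕ) : Prop := h i ≠ h (i-1)

instance (h : ℕ → Bool) (i : ℕ) : Decidable (Fl h i) := by unfold Fl; infer_instance

def runsFrom (h : ℕ → Bool) (a len : ℕ) : List ℕ :=
  runsAux (h a) 1 ((List.range (len-1)).map (fun i => h (a+1+i)))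

lemma runsAux_cons_pos (s : Bool) (n : ℕ) (x : Bool) (xs : List Bool) (h : x = s) :
    runsAux s n (x :: xs) = runsAux s (n+1) xs := by rw [runsAux, if_pos h]

lemma runsAux_cons_neg (s : Bool) (n : ℕ) (x : Bool) (xs : List Bool) (h : ¬ x = s) :
    runsAux s n (x :: xs) = n :: runsAux x 1 xs := by rw [runsAux, if_neg h]

lemma map_range_succ (f : ℕ → Bool) (n : ℕ) :
    (List.range (n+1)).map f = f 0 :: (List.range n).map (fun i => f (i+1)) := by
  simp [List.range_succ_eq_map, List.map_map, Function.comp_def]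

lemma noflip_const (h : ℕ → Bool) (a c : ℕ) (hnf : ∀ j, a < j → j < c → ¬ Fl h j) :
    ∀ j, a ≤ j → j < c → h j = h a := by
  intro j
  induction j with
  | zero => intro h1 _; have : a = 0 := Nat.le_zero.mp h1; rw [this]
  | succ n ih =>
    intro h1 h2
    rcases Nat.lt_or_ge a (n+1) with hlt | hge
    · have hn : h (n+1) = h n := by
        have := hnf (n+1) hlt h2
        simp [Fl] at this; exact this
      rw [hn]; exact ih (by omega) (by omega)
    · have : a = n+1 := by omega
      rw [this]

lemma const_runs (h : ℕ → Bool) :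
    ∀ len a k, (∀ j, a ≤ j → j ≤ a + len → h j = h a) →
    runsAux (h a) k ((List.range len).map (fun i => h (a+1+i))) = [k + len] := by
  intro len
  induction len with
  | zero => intro a k _; simp [runsAux]
  | succ n ih =>
    intro a k hconst
    simp only [map_range_succ]
    have h1 : h (a+1+0) = h a := hconst (a+1) (by omega) (by omega)
    rw [runsAux_cons_pos _ _ _ _ h1]
    have hf : (fun i => h (a+1+(i+1))) = (fun i => h (a+1+1+i)) := by
      funext i; congr 1; omega
    rw [hf]
    have hsw : h a = h (a+1) := (hconst (a+1) (by omega) (by omega)).symm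
    rw [hsw]
    rw [ih (a+1) (k+1) (fun j hj1 hj2 => by
      rw [hconst j (by omega) (by omega), hconst (a+1) (by omega) (by omega)])]
    congr 1; omega

lemma step (h : ℕ → Bool) :
    ∀ len a k c, a < c → c ≤ a + len →
      (∀ j, a ≤ j → j < c → h j = h a) → h c ≠ h a →
      runsAux (h a) k ((List.range len).map (fun i => h (a+1+i)))
        = (k + (c - a - 1)) :: runsAux (h c) 1 ((List.range (len - (c - a))).map (fun i => h (c+1+i))) := by
  intro len
  induction len with
  | zero => intro a k c h1 h2 _ _; omega
  | succ n ih =>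
    intro a k c h1 h2 hconst hflip
    simp only [map_range_succ]
    have hf : (fun i => h (a+1+(i+1))) = (fun i => h (a+1+1+i)) := by
      funext i; congr 1; omega
    rw [hf]
    rcases eq_or_lt_of_le (Nat.succ_le_of_lt h1) with hc | hc
    · -- c = a+1
      have e0 : a+1+0 = c := by omega
      have hne : ¬ h (a+1+0) = h a := by rw [e0]; exact hflip
      rw [runsAux_cons_neg _ _ _ _ hne]
      have e2 : k + (c - a - 1) = k := by omega
      have e3 : n + 1 - (c - a) = n := by omega
      have e4 : (fun i => h (a+1+1+i)) = (fun i => h (c+1+i)) := by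
        funext i; congr 1; omega
      rw [e0, e2, e3]
      all_goals try rw [e4]
      all_goals try rfl
    · -- c > a+1
      have he : h (a+1+0) = h a := hconst (a+1) (by omega) (by omega)
      rw [runsAux_cons_pos _ _ _ _ he]
      have hsw : h a = h (a+1) := (hconst (a+1) (by omega) (by omega)).symm
      rw [hsw]
      rw [ih (a+1) (k+1) c (by omega) (by omega)
        (fun j hj1 hj2 => by rw [hconst j (by omega) hj2, hconst (a+1) (by omega) (by omega)])
        (by rw [← hsw]; exact hflip)]
      have e2 : n - (c - (a+1)) = n + 1 - (c - a) := by omega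
      rw [e2]
      have e3 : k + 1 + (c - (a+1) - 1) = k + (c - a - 1) := by omega
      rw [e3]

lemma split (h : ℕ → Bool) :
    ∀ len1, ∀ a len2, 1 ≤ len1 → 1 ≤ len2 → Fl h (a + len1) →
    runsFrom h a (len1 + len2) = runsFrom h a len1 ++ runsFrom h (a + len1) len2 := by
  intro len1
  induction len1 using Nat.strong_induction_on with
  | _ len1 ih =>
    intro a len2 h1 h2 hf
    have hex : ∃ c, a < c ∧ Fl h c := ⟨a + len1, by omega, hf⟩
    set c := Nat.find hex with hcdef
    obtain ⟨hac, hfc⟩ := Nat.find_spec hex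
    have hmin : ∀ j, a < j → j < c → ¬ Fl h j := fun j hj1 hj2 hfj =>
      Nat.find_min hex hj2 ⟨hj1, hfj⟩
    have hcle : c ≤ a + len1 := Nat.find_min' hex ⟨by omega, hf⟩
    have hconst : ∀ j, a ≤ j → j < c → h j = h a := noflip_const h a c hmin
    have hflip' : h c ≠ h a := by
      have h1' : h (c-1) = h a := hconst (c-1) (by omega) (by omega)
      rw [← h1']; exact hfc
    rcases eq_or_lt_of_le hcle with hceq | hclt
    · -- c = a + len1 : left factor is a single run
      have lhs : runsFrom h a (len1 + len2)
          = (c - a) :: runsAux (h c) 1 ((List.range (len2 - 1)).map (fun i => h (c+1+i))) := by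
        unfold runsFrom
        rw [step h (len1 + len2 - 1) a 1 c hac (by omega) hconst hflip']
        have e1 : 1 + (c - a - 1) = c - a := by omega
        have e2 : len1 + len2 - 1 - (c - a) = len2 - 1 := by omega
        rw [e1, e2]
      have rhs1 : runsFrom h a len1 = [c - a] := by
        unfold runsFrom
        rw [const_runs h (len1 - 1) a 1 (fun j hj1 hj2 => hconst j hj1 (by omega))]
        congr 1; omega
      rw [lhs, rhs1]
      have rhs2 : runsFrom h (a + len1) len2
          = runsAux (h c) 1 ((List.range (len2 - 1)).map (fun i => h (c+1+i))) := by
        unfold runsFrom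
        rw [← hceq]
      rw [rhs2]
      rfl
    · -- c < a + len1 : recurse
      have lhs : runsFrom h a (len1 + len2)
          = (c - a) :: runsFrom h c (len1 - (c - a) + len2) := by
        unfold runsFrom
        rw [step h (len1 + len2 - 1) a 1 c hac (by omega) hconst hflip']
        have e1 : 1 + (c - a - 1) = c - a := by omega
        have e2 : len1 + len2 - 1 - (c - a) = len1 - (c - a) + len2 - 1 := by omega
        rw [e1, e2]
      have rhs : runsFrom h a len1 = (c - a) :: runsFrom h c (len1 - (c - a)) := by
        unfold runsFrom
        rw [step h (len1 - 1) a 1 c hac (by omega) hconst hflip']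
        have e1 : 1 + (c - a - 1) = c - a := by omega
        have e2 : len1 - 1 - (c - a) = len1 - (c - a) - 1 := by omega
        rw [e1, e2]
      rw [lhs, rhs]
      have hmid : Fl h (c + (len1 - (c - a))) := by
        have e : c + (len1 - (c - a)) = a + len1 := by omega
        rw [e]; exact hf
      have hrec := ih (len1 - (c - a)) (by omega) c len2 (by omega) h2 hmid
      rw [hrec]
      have e : c + (len1 - (c - a)) = a + len1 := by omega
      rw [e]
      simp

lemma main (h : ℕ → Bool) (m1 : ℕ)
    (HnextL : ∀ j, 1 ≤ j → Fl h j → ∀ j', j < j' → j' < j + m1 → ¬ Fl h j')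
    (HnextU : ∀ j, ∃ c, j < c ∧ c ≤ j + m1 + 1 ∧ Fl h c)
    (Hpair : ∀ i c c', 1 ≤ i → Fl h i → Fl h c → Fl h c' → i < c → c < c' →
      (∀ j, i < j → j < c → ¬ Fl h j) → (∀ j, c < j → j < c' → ¬ Fl h j) →
      ¬(c - i = m1 + 1 ∧ c' - c = m1 + 1)) :
    ∀ len, ∀ a, 1 ≤ a → 1 ≤ len → Fl h a → Fl h (a + len) →
      (∃ c, a < c ∧ c ≤ a + len ∧ Fl h c ∧ (∀ j, a < j → j < c → ¬ Fl h j) ∧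
        (runsFrom h a len).head? = some (c - a)) ∧
      (∀ t ∈ runsFrom h a len, m1 ≤ t ∧ t ≤ m1 + 1) ∧
      List.Chain' (fun x y => ¬(x = m1+1 ∧ y = m1+1)) (runsFrom h a len) := by
  intro len
  induction len using Nat.strong_induction_on with
  | _ len ih =>
    intro a ha hlen hfa hfe
    have hex : ∃ c, a < c ∧ Fl h c := by
      obtain ⟨c, h1, _, h3⟩ := HnextU a; exact ⟨c, h1, h3⟩
    set c := Nat.find hex with hcdef
    obtain ⟨hac, hfc⟩ := Nat.find_spec hex
    have hmin : ∀ j, a < j → j < c → ¬ Fl h j := fun j hj1 hj2 hfj =>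
      Nat.find_min hex hj2 ⟨hj1, hfj⟩
    have hcle : c ≤ a + len := Nat.find_min' hex ⟨by omega, hfe⟩
    have hchigh : c ≤ a + m1 + 1 := by
      obtain ⟨c', h1, h2, h3⟩ := HnextU a
      have := Nat.find_min' hex ⟨h1, h3⟩; omega
    have hclow : a + m1 ≤ c := by
      by_contra hlt
      push_neg at hlt
      exact HnextL a ha hfa c hac hlt hfc
    have hconst : ∀ j, a ≤ j → j < c → h j = h a := noflip_const h a c hmin
    have hflip' : h c ≠ h a := by
      have h1' : h (c-1) = h a := hconst (c-1) (by omega) (by omega)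
      rw [← h1']; exact hfc
    rcases eq_or_lt_of_le hcle with hceq | hclt
    · -- single run
      have hrun : runsFrom h a len = [len] := by
        unfold runsFrom
        rw [const_runs h (len - 1) a 1 (fun j hj1 hj2 => hconst j hj1 (by omega))]
        congr 1; omega
      refine ⟨⟨c, hac, hcle, hfc, hmin, ?_⟩, ?_, ?_⟩
      · rw [hrun]; simp; omega
      · intro t ht; rw [hrun] at ht; simp at ht; omega
      · rw [hrun]; exact List.isChain_singleton _
    · -- at least two runs
      have hstep : runsFrom h a len = (c - a) :: runsFrom h c (len - (c - a)) := by
        unfold runsFrom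
        rw [step h (len - 1) a 1 c hac (by omega) hconst hflip']
        have e1 : 1 + (c - a - 1) = c - a := by omega
        have e2 : len - 1 - (c - a) = len - (c - a) - 1 := by omega
        rw [e1, e2]
      have hfe2 : Fl h (c + (len - (c - a))) := by
        have e : c + (len - (c - a)) = a + len := by omega
        rw [e]; exact hfe
      obtain ⟨⟨c2, hcc2, hc2le, hfc2, hmin2, hhead2⟩, hbound2, hchain2⟩ :=
        ih (len - (c - a)) (by omega) c (by omega) (by omega) hfc hfe2
      refine ⟨⟨c, hac, hcle, hfc, hmin, ?_⟩, ?_, ?_⟩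
      · rw [hstep]; rfl
      · intro t ht
        rw [hstep] at ht
        rcases List.mem_cons.mp ht with h' | h'
        · omega
        · exact hbound2 t h'
      · rw [hstep]
        show List.IsChain _ _
        rw [List.isChain_cons]
        refine ⟨?_, hchain2⟩
        intro y hy
        rw [hhead2] at hy
        simp at hy
        subst hy
        have := Hpair a c c2 ha hfa hfc hfc2 hac hcc2 hmin hmin2
        intro ⟨e1, e2⟩
        exact this ⟨e1, e2⟩


/-- the sign function -/
def sgn (p q i : ℕ) : Bool := decide ((i * q / p) % 2 = 0)

section arith

variable {p q m1 : ℕ}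

lemma t_mono (i j : ℕ) (hij : i ≤ j) : i*q/p ≤ j*q/p :=
  Nat.div_le_div_right (Nat.mul_le_mul_right _ hij)

lemma t_step (hp : 0 < p) (hqp : q < p) (i : ℕ) : (i+1)*q/p ≤ i*q/p + 1 := by
  have h2 : (i+1)*q/p < i*q/p + 2 := by
    rw [Nat.div_lt_iff_lt_mul hp]
    have hdm := Nat.div_add_mod (i*q) p
    have hmod := Nat.mod_lt (i*q) hp
    have e1 : (i*q/p + 2) * p = p * (i*q/p) + 2*p := by ring
    have e2 : (i+1)*q = i*q + q := by ring
    omega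
  omega

lemma fl_iff (hp : 0 < p) (hqp : q < p) (i : ℕ) (hi : 1 ≤ i) :
    Fl (sgn p q) i ↔ i*q/p = (i-1)*q/p + 1 := by
  have h1 : (i-1)*q/p ≤ i*q/p := t_mono (i-1) i (by omega)
  have h2 : i*q/p ≤ (i-1)*q/p + 1 := by
    have := t_step hp hqp (i-1) (q := q)
    have e : i - 1 + 1 = i := by omega
    rwa [e] at this
  unfold Fl sgn
  rcases (by omega : i*q/p = (i-1)*q/p ∨ i*q/p = (i-1)*q/p + 1) with h | h <;> rw [h] <;>
    simp [decide_eq_decide] <;> omega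

lemma fl_mod (hp : 0 < p) (hqp : q < p) (i : ℕ) (hi : 1 ≤ i)
    (hf : Fl (sgn p q) i) : (i*q) % p < q := by
  rw [fl_iff hp hqp i hi] at hf
  have hdm := Nat.div_add_mod ((i-1)*q) p
  have hdm2 := Nat.div_add_mod (i*q) p
  have hmod := Nat.mod_lt ((i-1)*q) hp
  have hmod2 := Nat.mod_lt (i*q) hp
  have e2 : i*q = (i-1)*q + q := by
    have h : i - 1 + 1 = i := by omega
    nth_rewrite 1 [← h]; ring
  have e3 : p * (i*q/p) = p * ((i-1)*q/p) + p := by rw [hf]; ring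
  omega

lemma t_const_of_noflip (hp : 0 < p) (hqp : q < p) :
    ∀ d j, (∀ k, j < k → k ≤ j + d → ¬ Fl (sgn p q) k) → (j+d)*q/p = j*q/p := by
  intro d
  induction d with
  | zero => intro j _; rfl
  | succ n ih =>
    intro j hnf
    have h1 : (j+n)*q/p = j*q/p := ih j (fun k hk1 hk2 => hnf k hk1 (by omega))
    have h2 : ¬ Fl (sgn p q) (j+n+1) := hnf (j+n+1) (by omega) (by omega)
    rw [fl_iff hp hqp (j+n+1) (by omega)] at h2
    have e : j+n+1-1 = j+n := by omega
    rw [e] at h2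
    have h3 : (j+n)*q/p ≤ (j+(n+1))*q/p := t_mono _ _ (by omega)
    have h4 : (j+(n+1))*q/p ≤ (j+n)*q/p + 1 := by
      have := t_step hp hqp (j+n) (q := q)
      have e2 : j+n+1 = j+(n+1) := by omega
      rwa [e2] at this
    have e2 : j+n+1 = j+(n+1) := by omega
    rw [e2] at h2
    omega

variable (hp : 0 < p) (hq : 0 < q) (hqp : q < p) (hm1 : 1 ≤ m1)
  (hA : m1 * q < p) (hB : 2*p ≤ (2*m1+1) * q)

include hp hq hqp hm1 hA in
lemma hnextL : ∀ j, 1 ≤ j → Fl (sgn p q) j →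
    ∀ j', j < j' → j' < j + m1 → ¬ Fl (sgn p q) j' := by
  intro j hj hf j' hjj' hj'
  have hmod := fl_mod hp hqp j hj hf
  have hdm := Nat.div_add_mod (j*q) p
  have hflat : ∀ k, j ≤ k → k < j + m1 → k*q/p = j*q/p := by
    intro k hk1 hk2
    have e1 : k*q = j*q + (k-j)*q := by
      have : k = j + (k - j) := by omega
      nth_rewrite 1 [this]; ring
    have e2 : (k-j)*q ≤ (m1-1)*q := Nat.mul_le_mul_right _ (by omega)
    have e3 : (m1-1)*q + q = m1*q := by
      have : m1 - 1 + 1 = m1 := by omega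
      nth_rewrite 2 [← this]; ring
    have e4 : k*q = (j*q%p + (k-j)*q) + p * (j*q/p) := by omega
    rw [e4, Nat.add_mul_div_left _ _ hp, Nat.div_eq_of_lt (by omega)]
    omega
  intro hf'
  rw [fl_iff hp hqp j' (by omega)] at hf'
  have k1 := hflat j' (by omega) hj'
  have k2 := hflat (j'-1) (by omega) (by omega)
  omega

include hp hq hqp hm1 hB in
lemma hnextU : ∀ j, ∃ c, j < c ∧ c ≤ j + m1 + 1 ∧ Fl (sgn p q) c := by
  intro j
  by_contra hcon
  push_neg at hcon
  have hnf : ∀ k, j < k → k ≤ j + (m1+1) → ¬ Fl (sgn p q) k := by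
    intro k hk1 hk2 hf
    exact hcon k hk1 (by omega) hf
  have hconst := t_const_of_noflip hp hqp (m1+1) j hnf
  have hup : j*q/p + 1 ≤ (j+(m1+1))*q/p := by
    rw [Nat.le_div_iff_mul_le hp]
    have hdm : p * (j*q/p) ≤ j*q := by
      have := Nat.div_add_mod (j*q) p; omega
    have e1 : (j+(m1+1))*q = j*q + (m1+1)*q := by ring
    have e2 : (m1+1)*q + (m1+1)*q = (2*m1+1)*q + q := by ring
    have e3 : (j*q/p + 1)*p = p*(j*q/p) + p := by ring
    omega
  omega

include hp hq hqp hm1 hA hB in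
lemma hpair : ∀ i c c', 1 ≤ i → Fl (sgn p q) i → Fl (sgn p q) c → Fl (sgn p q) c' →
    i < c → c < c' →
    (∀ j, i < j → j < c → ¬ Fl (sgn p q) j) → (∀ j, c < j → j < c' → ¬ Fl (sgn p q) j) →
    ¬(c - i = m1 + 1 ∧ c' - c = m1 + 1) := by
  intro i c c' hi hfi hfc hfc' hic hcc' hm1' hm2'
  rintro ⟨e1, e2⟩
  have t1 : (c-1)*q/p = i*q/p := by
    have := t_const_of_noflip hp hqp (c-1-i) i (fun k hk1 hk2 => hm1' k hk1 (by omega))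
    have e : i + (c-1-i) = c-1 := by omega
    rwa [e] at this
  have t2 : c*q/p = (c-1)*q/p + 1 := (fl_iff hp hqp c (by omega)).mp hfc
  have t3 : (c'-1)*q/p = c*q/p := by
    have := t_const_of_noflip hp hqp (c'-1-c) c (fun k hk1 hk2 => hm2' k hk1 (by omega))
    have e : c + (c'-1-c) = c'-1 := by omega
    rwa [e] at this
  have t4 : c'*q/p = (c'-1)*q/p + 1 := (fl_iff hp hqp c' (by omega)).mp hfc'
  have hmi := fl_mod hp hqp i hi hfi
  have hmc' := fl_mod hp hqp c' (by omega) hfc'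
  have hdmi := Nat.div_add_mod (i*q) p
  have hdmc' := Nat.div_add_mod (c'*q) p
  have e3 : c'*q = i*q + (2*m1+2)*q := by
    have : c' = i + (2*m1+2) := by omega
    rw [this]; ring
  have e4 : (2*m1+2)*q = (2*m1+1)*q + q := by ring
  have e5 : p * (c'*q/p) = p * (i*q/p) + 2*p := by
    rw [t4, t3, t2, t1]; ring
  omega

/-! ### periodicity -/

include hp in
lemma sgn_period (i : ℕ) : sgn p q (i + 2*p) = sgn p q i := by
  unfold sgn
  have e : (i + 2*p)*q = i*q + p*(2*q) := by ring
  rw [e, Nat.add_mul_div_left _ _ hp, decide_eq_decide]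
  omega

include hp in
lemma sgn_shift_mul : ∀ (k i : ℕ), sgn p q (i + 2*p*k) = sgn p q i := by
  intro k
  induction k with
  | zero => intro i; rfl
  | succ n ih =>
    intro i
    have e : i + 2*p*(n+1) = (i + 2*p*n) + 2*p := by ring
    rw [e, sgn_period hp, ih]

include hp in
lemma sgn_mod (i : ℕ) : sgn p q (i % (2*p)) = sgn p q i := by
  conv_rhs => rw [← Nat.mod_add_div i (2*p)]
  rw [sgn_shift_mul hp (i/(2*p)) (i % (2*p))]

include hp in
lemma runsFrom_shift (A : ℕ) :
    runsFrom (sgn p q) (A + 2*p) (2*p) = runsFrom (sgn p q) A (2*p) := by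
  unfold runsFrom
  have e : (fun i => sgn p q (A + 2*p + 1 + i)) = (fun i => sgn p q (A + 1 + i)) := by
    funext i
    have e2 : A + 2*p + 1 + i = (A+1+i) + 2*p := by omega
    rw [e2, sgn_period hp]
  rw [sgn_period hp A, e]

include hp hq in
lemma sgn_reflect (hco : Nat.Coprime p q) (j : ℕ)
    (h1 : 1 ≤ j) (h2 : j < p) : sgn p q (2*p - j) = ! sgn p q j := by
  have hdm := Nat.div_add_mod (j*q) p
  set d := j*q/p with hd
  set e := j*q % p with he
  have hepos : 0 < e := by
    rcases Nat.eq_zero_or_pos e with h0 | h0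
    · exfalso
      have hdvd : p ∣ j*q := Nat.dvd_of_mod_eq_zero h0
      have hj := Nat.Coprime.dvd_of_dvd_mul_right hco hdvd
      have := Nat.le_of_dvd (by omega) hj
      omega
    · exact h0
  have hep : e < p := Nat.mod_lt _ hp
  have hdq : d < q := by
    rw [hd, Nat.div_lt_iff_lt_mul hp]
    have h3 : j*q < p*q := mul_lt_mul_of_pos_right h2 hq
    have h4 : p*q = q*p := by ring
    omega
  have hkey : (2*p - j)*q = (p - e) + p*(2*q - d - 1) := by
    have hX : (2*p - j)*q + j*q = 2*p*q := by
      rw [← Nat.add_mul]; congr 1; omega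
    have hY : p*(2*q - d - 1) + p*(d+1) = p*(2*q) := by
      rw [← Nat.mul_add]; congr 1; omega
    have hZ : p*(d+1) = p*d + p := by ring
    have hW : 2*p*q = p*(2*q) := by ring
    omega
  unfold sgn
  rw [hkey, Nat.add_mul_div_left _ _ hp, Nat.div_eq_of_lt (by omega)]
  rw [show (0 + (2*q - d - 1)) = 2*q - d - 1 from by omega]
  have hpar : (2*q - d - 1) % 2 ≠ d % 2 := by omega
  rcases Nat.mod_two_eq_zero_or_one d with h0 | h0 <;>
    rcases Nat.mod_two_eq_zero_or_one (2*q-d-1) with h1' | h1' <;>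
      simp [h0, h1'] <;> omega

include hp hq hqp in
lemma uList_signs (hco : Nat.Coprime p q) :
    (uList p q).map Prod.snd = (List.range (2*p)).map (sgn p q) := by
  have hmid : (if p % 2 = 1 then [((1 : Fin 2), decide (q % 2 = 0))]
      else [((0:Fin 2), false)]).map Prod.snd = [sgn p q p] := by
    have hpq : p*q/p = q := Nat.mul_div_cancel_left q hp
    rcases Nat.mod_two_eq_zero_or_one p with h0 | h0
    · have hqodd : q % 2 = 1 := by
        rcases Nat.mod_two_eq_zero_or_one q with h1 | h1
        · exfalso
          have h2 : (2:ℕ) ∣ p := by omega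
          have h2' : (2:ℕ) ∣ q := by omega
          have := Nat.dvd_gcd h2 h2'
          rw [Nat.Coprime.gcd_eq_one hco] at this
          omega
        · exact h1
      rw [if_neg (by omega)]
      simp [sgn, hpq, hqodd]
    · rw [if_pos h0]
      simp [sgn, hpq]
  have hhat : (hatList p q).map Prod.snd = (List.range (p-1)).map (fun j => sgn p q (j+1)) := by
    unfold hatList
    rw [List.map_map]
    apply List.map_congr_left
    intro a _
    rfl
  have hinv : (invWord (hatList p q)).map Prod.snd
      = (List.range (p-1)).map (fun j => sgn p q (p+1+j)) := by
    unfold invWord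
    rw [List.map_reverse, List.map_map]
    have h1 : (hatList p q).map (fun x => Prod.snd (x.1, !x.2))
        = (List.range (p-1)).map (fun j => ! sgn p q (j+1)) := by
      unfold hatList
      rw [List.map_map]
      apply List.map_congr_left
      intro a _
      rfl
    rw [show ((Prod.snd ∘ fun x : Letter => (x.1, !x.2)) = fun x : Letter => !x.2) from rfl]
    have h1' : (hatList p q).map (fun x : Letter => !x.2)
        = (List.range (p-1)).map (fun j => ! sgn p q (j+1)) := h1
    rw [h1']
    apply List.ext_getElem
    · simp
    · intro i hi1 hi2
      rw [List.getElem_reverse]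
      simp only [List.getElem_map, List.getElem_range, List.length_map, List.length_range] at hi1 hi2 ⊢
      have hlt : i < p - 1 := by simpa using hi2
      have e : p - 1 - 1 - i + 1 = p - 1 - i := by omega
      rw [e]
      have hrefl := sgn_reflect hp hq hco (p-1-i) (by omega) (by omega)
      have e2 : 2*p - (p-1-i) = p+1+i := by omega
      rw [e2] at hrefl
      rw [hrefl]
  -- expand left side
  have lhs : (uList p q).map Prod.snd
      = [true] ++ ((List.range (p-1)).map (fun j => sgn p q (j+1))
        ++ ([sgn p q p]
        ++ (List.range (p-1)).map (fun j => sgn p q (p+1+j)))) := by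
    unfold uList
    simp only [List.map_cons, List.map_append]
    rw [hhat, hmid, hinv]
    simp [List.append_assoc]
  rw [lhs]
  have h2p : 2*p = 1 + ((p-1) + (1 + (p-1))) := by omega
  have hr1 : List.range 1 = [0] := rfl
  rw [h2p, List.range_add, List.range_add, List.range_add]
  simp only [List.map_append, List.map_map]
  congr 1
  · rw [hr1]; simp [sgn]
  congr 1
  · apply List.map_congr_left
    intro a _
    simp only [Function.comp_apply]
    congr 1
    omega
  congr 1
  · rw [hr1]
    simp only [List.map_cons, List.map_nil, Function.comp_apply]
    congr 2
    omega
  · apply List.map_congr_left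
    intro a _
    simp only [Function.comp_apply]
    congr 1
    omega

include hp in
lemma rotate_signs (n : ℕ) :
    ((List.range (2*p)).map (sgn p q)).rotate n
      = (List.range (2*p)).map (fun i => sgn p q ((n % (2*p) + 2*p) + i)) := by
  apply List.ext_getElem
  · simp
  · intro i h1 h2
    rw [List.getElem_rotate]
    simp only [List.length_map, List.length_range, List.getElem_map, List.getElem_range]
    rw [sgn_mod hp]
    have e : n % (2*p) + 2*p + i = (n % (2*p) + i) + 2*p := by omega
    rw [e, sgn_period hp]
    conv_lhs => rw [show i + n = (n % (2*p) + i) + 2*p * (n / (2*p)) from by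
      have := Nat.mod_add_div n (2*p); omega]
    rw [sgn_shift_mul hp]


include hp in
lemma fl_period (i : ℕ) (hi : 1 ≤ i) : Fl (sgn p q) (i + 2*p) ↔ Fl (sgn p q) i := by
  unfold Fl
  rw [sgn_period hp i]
  have e : i + 2*p - 1 = (i-1) + 2*p := by omega
  rw [e, sgn_period hp]

end arith

lemma Sseq_eq (w : Word) (N : ℕ) (hN : 1 ≤ N) (g : ℕ → Bool)
    (hmap : w.map Prod.snd = (List.range N).map g) :
    Sseq w = runsAux (g 0) 1 ((List.range (N-1)).map (fun i => g (i+1))) := by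
  unfold Sseq
  rw [hmap]
  obtain ⟨M, rfl⟩ : ∃ M, N = M + 1 := ⟨N-1, by omega⟩
  rw [map_range_succ]
  simp

lemma Sseq_eq' (w : Word) (N : ℕ) (hN : 1 ≤ N) (s : ℕ → Bool) (A : ℕ)
    (hmap : w.map Prod.snd = (List.range N).map (fun i => s (A+i))) :
    Sseq w = runsFrom s A N := by
  rw [Sseq_eq w N hN (fun i => s (A+i)) hmap]
  unfold runsFrom
  congr 1
  apply List.map_congr_left
  intro a _
  show s (A+(a+1)) = s (A+1+a)
  congr 1
  omega

lemma cf_bounds : ∀ l : List ℕ, (∀ x ∈ l, 0 < x) → 0 ≤ cf l ∧ cf l ≤ 1 := by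
  intro l
  induction l with
  | nil => intro _; simp [cf]
  | cons m rest ih =>
    intro h
    have hm : (1:ℚ) ≤ (m:ℚ) := by exact_mod_cast h m (by simp)
    have hr := ih (fun x hx => h x (by simp [hx]))
    have hden : (1:ℚ) ≤ (m:ℚ) + cf rest := by linarith [hr.1]
    constructor
    · rw [cf]; positivity
    · rw [cf, div_le_one (by linarith)]; linarith

end CSaux

/-- For `r = [m₁, m₂, …, m_k]` with `k ≥ 2` and `m₂ ≥ 2`, every term of `CS(r)` is
`m₁` or `m₁+1`, and no two (cyclically) consecutive terms both equal `m₁+1`. -/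
theorem CS_terms (m1 m2 : ℕ) (rest : List ℕ) (hm1 : 0 < m1) (hm2 : 2 ≤ m2)
    (hrest : ∀ x ∈ rest, 0 < x) (hlast : ∀ x ∈ (m2 :: rest).getLast?, 2 ≤ x)
    (L : List ℕ) (hL : IsCSRep (slopeWord (cf (m1 :: m2 :: rest))) L) :
    (∀ t ∈ L, t = m1 ∨ t = m1 + 1) ∧
      ∀ n, List.Chain' (fun x y => ¬(x = m1 + 1 ∧ y = m1 + 1)) (L.rotate n) := by
  clear hlast
  set r := cf (m1 :: m2 :: rest) with hrdef
  have hy := CSaux.cf_bounds rest hrest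
  have hm2Q : (2:ℚ) ≤ (m2:ℚ) := by exact_mod_cast hm2
  have hxval : cf (m2 :: rest) = 1/((m2:ℚ) + cf rest) := by rw [cf]
  have hden2 : (2:ℚ) ≤ (m2:ℚ) + cf rest := by linarith [hy.1]
  have hxpos : 0 < cf (m2 :: rest) := by rw [hxval]; positivity
  have hxle : cf (m2 :: rest) ≤ 1/2 := by
    rw [hxval]
    exact one_div_le_one_div_of_le (by norm_num) hden2
  have hm1Q : (1:ℚ) ≤ (m1:ℚ) := by exact_mod_cast hm1
  have hrval : r = 1/((m1:ℚ) + cf (m2::rest)) := by rw [hrdef, cf]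
  have hdpos : 0 < (m1:ℚ) + cf (m2::rest) := by linarith
  have hrpos : 0 < r := by rw [hrval]; positivity
  have h1Q : (m1:ℚ) * r < 1 := by
    rw [hrval, mul_one_div, div_lt_one hdpos]; linarith
  have h2Q : 2 ≤ (2*(m1:ℚ)+1) * r := by
    rw [hrval, mul_one_div, le_div_iff₀ hdpos]; linarith
  have hnum : 0 < r.num := Rat.num_pos.mpr hrpos
  set p := r.den with hpdef
  set q := r.num.toNat with hqdef
  have hp : 0 < p := r.pos
  have hqz : (q:ℤ) = r.num := Int.toNat_of_nonneg hnum.le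
  have hq : 0 < q := by omega
  have hrq : ((q:ℚ))/(p:ℚ) = r := by
    rw [← Rat.num_div_den r]
    congr 1
    exact_mod_cast hqz
  have hpQ : (0:ℚ) < (p:ℚ) := by exact_mod_cast hp
  have hA : m1 * q < p := by
    have h := h1Q
    rw [← hrq, ← mul_div_assoc, div_lt_one hpQ] at h
    exact_mod_cast h
  have hB : 2*p ≤ (2*m1+1) * q := by
    have h := h2Q
    rw [← hrq, ← mul_div_assoc, le_div_iff₀ hpQ] at h
    exact_mod_cast h
  have hqp : q < p := by
    have h1 : 1*q ≤ m1*q := Nat.mul_le_mul_right q hm1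
    have h2 : 1*q = q := by ring
    omega
  have hm1p : m1 < p := by
    have h1 : m1*1 ≤ m1*q := Nat.mul_le_mul_left m1 hq
    have h2 : m1*1 = m1 := by ring
    omega
  have hco : Nat.Coprime p q := by
    have hred := r.reduced
    have hnab : r.num.natAbs = q := by omega
    rw [hnab] at hred
    exact hred.symm
  -- the word and its rotation
  obtain ⟨n, hbd, hSeq⟩ := hL
  set w' := (slopeWord r).rotate n with hw'def
  have hwmap : (slopeWord r).map Prod.snd = (List.range (2*p)).map (CSaux.sgn p q) :=
    CSaux.uList_signs hp hq hqp hco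
  obtain ⟨A, hAdef⟩ : ∃ A, n % (2*p) + 2*p = A := ⟨_, rfl⟩
  have hmap : w'.map Prod.snd = (List.range (2*p)).map (fun i => CSaux.sgn p q (A + i)) := by
    rw [hw'def, List.map_rotate, hwmap, CSaux.rotate_signs hp n, hAdef]
  have hlen : w'.length = 2*p := by
    have := congrArg List.length hmap
    simpa using this
  have HU := CSaux.hnextU hp hq hqp hm1 hB
  have HL := CSaux.hnextL hp hq hqp hm1 hA
  have HP := CSaux.hpair hp hq hqp hm1 hA hB
  -- boundary gives flips at A and A + 2p
  have hbd2 : CSaux.Fl (CSaux.sgn p q) A ∧ CSaux.Fl (CSaux.sgn p q) (A + 2*p) := by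
    have hsig : ∀ i, i < 2*p → ∃ x ∈ w', x.2 = CSaux.sgn p q (A+i) := by
      intro i h
      have hmem : CSaux.sgn p q (A+i) ∈ w'.map Prod.snd := by
        rw [hmap]
        exact List.mem_map_of_mem (List.mem_range.mpr h)
      obtain ⟨x, hx1, hx2⟩ := List.mem_map.mp hmem
      exact ⟨x, hx1, hx2⟩
    rcases hbd with hall | hha
    · exfalso
      obtain ⟨c, hc1, hc2, hc3⟩ := HU A
      obtain ⟨x, hx1, hx2⟩ := hsig (c - A) (by omega)
      obtain ⟨y, hy1, hy2⟩ := hsig (c - A - 1) (by omega)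
      have hxy := hall x hx1 y hy1
      rw [hx2, hy2] at hxy
      have e1 : A + (c - A) = c := by omega
      have e2 : A + (c - A - 1) = c - 1 := by omega
      rw [e1, e2] at hxy
      exact hc3 hxy
    · -- head and last signs differ
      have hmh : ((List.range (2*p)).map (fun i => CSaux.sgn p q (A+i))).head?
          = some (CSaux.sgn p q (A+0)) := by
        obtain ⟨M, hM⟩ : ∃ M, 2*p = M+1 := ⟨2*p-1, by omega⟩
        rw [hM, CSaux.map_range_succ]
        rfl
      have hml : ((List.range (2*p)).map (fun i => CSaux.sgn p q (A+i))).getLast?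
          = some (CSaux.sgn p q (A+(2*p-1))) := by
        rw [List.getLast?_eq_getElem?]
        rw [List.getElem?_eq_getElem (by simp; omega)]
        simp
      obtain ⟨x, hx1, hx2⟩ : ∃ x, w'.head? = some x ∧ x.2 = CSaux.sgn p q (A+0) := by
        have h := List.head?_map (f := Prod.snd) (l := w')
        rw [hmap, hmh] at h
        obtain ⟨x, hx1, hx2⟩ := Option.map_eq_some_iff.mp h.symm
        exact ⟨x, hx1, hx2⟩
      obtain ⟨y, hy1, hy2⟩ : ∃ y, w'.getLast? = some y ∧ y.2 = CSaux.sgn p q (A+(2*p-1)) := by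
        have h := List.getLast?_map (f := Prod.snd) (l := w')
        rw [hmap, hml] at h
        obtain ⟨y, hy1, hy2⟩ := Option.map_eq_some_iff.mp h.symm
        exact ⟨y, hy1, hy2⟩
      have hne := hha x (by rw [hx1]; simp) y (by rw [hy1]; simp)
      rw [hx2, hy2] at hne
      have hs0 : CSaux.sgn p q A ≠ CSaux.sgn p q (A + (2*p-1)) := by
        have e : A + 0 = A := by omega
        rwa [e] at hne
      constructor
      · show CSaux.sgn p q A ≠ CSaux.sgn p q (A-1)
        have e : A + (2*p-1) = (A-1) + 2*p := by omega
        rw [e, CSaux.sgn_period hp] at hs0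
        exact hs0
      · show CSaux.sgn p q (A+2*p) ≠ CSaux.sgn p q (A+2*p-1)
        rw [CSaux.sgn_period hp A]
        have e : A + 2*p - 1 = A + (2*p-1) := by omega
        rw [e]
        exact hs0
  obtain ⟨hflA, hflA2⟩ := hbd2
  have hSL : Sseq w' = CSaux.runsFrom (CSaux.sgn p q) A (2*p) :=
    CSaux.Sseq_eq' w' (2*p) (by omega) (CSaux.sgn p q) A hmap
  have hL2 : L = CSaux.runsFrom (CSaux.sgn p q) A (2*p) := by
    rw [← hSeq, hSL]
  have hmain := CSaux.main (CSaux.sgn p q) m1 HL HU HP (2*p) A (by omega) (by omega) hflA hflA2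
  constructor
  · intro t ht
    rw [hL2] at ht
    have := hmain.2.1 t ht
    omega
  · have hflA2' : CSaux.Fl (CSaux.sgn p q) (A + (2*p + 2*p)) := by
      have e : A + (2*p+2*p) = (A + 2*p) + 2*p := by omega
      rw [e, CSaux.fl_period hp (A+2*p) (by omega)]
      exact hflA2
    have hmain2 := CSaux.main (CSaux.sgn p q) m1 HL HU HP (2*p+2*p) A (by omega) (by omega) hflA hflA2'
    have hsplit := CSaux.split (CSaux.sgn p q) (2*p) A (2*p) (by omega) (by omega) hflA2
    have hshift := CSaux.runsFrom_shift hp A (q := q)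
    have hLL : List.Chain' (fun x y => ¬(x = m1+1 ∧ y = m1+1)) (L ++ L) := by
      have h := hmain2.2.2
      rw [hsplit, hshift] at h
      rw [hL2]
      exact h
    intro n'
    rcases eq_or_ne L [] with h0 | h0
    · rw [h0]; exact List.isChain_nil
    · have hlpos : 0 < L.length := List.length_pos_iff.mpr h0
      have hrot : L.rotate n' = L.drop (n' % L.length) ++ L.take (n' % L.length) := by
        rw [← List.rotate_mod, List.rotate_eq_drop_append_take (Nat.le_of_lt (Nat.mod_lt _ hlpos))]
      rw [hrot]
      apply hLL.infix
      refine ⟨L.take (n' % L.length), L.drop (n' % L.length), ?_⟩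
      conv_rhs => rw [← List.take_append_drop (n' % L.length) L]
      simp only [List.append_assoc]
end

section
/- Let G₀ = ⟨a, b | u_{r₀} = 1⟩ with r₀ = [4,3,3], let X be the alternating word in {a,b} starting with a and ending with a^{-1} whose S-sequence is (4,4,4,5,4,4), and let f: F(a,b) → F(a,b) be the homomorphism with f(a) = X^{-1}, f(b) = b^{-1}. Then the composition of f with the canonical surjection F(a,b) → G₀ is surjective. -/
/-- The word `w` with `S(w) = (3,3,3,4,3,3)` starting with `a` (explicit letters). -/
def wWord : Word := [(0, true), (1, true), (0, true), (1, false), (0, false), (1, false), (0, true), (1, true), (0, true), (1, false), (0, false), (1, false), (0, false), (1, true), (0, true), (1, true), (0, false), (1, false), (0, false)]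

def conjA1 : Word := [(0, true), (1, true), (0, true), (1, true), (0, false), (1, false), (0, false), (1, false), (0, true), (1, true), (0, true), (1, true), (0, true), (1, false), (0, false), (1, false), (0, false), (1, true), (0, true), (1, true), (0, true), (1, false), (0, false), (1, false), (0, false), (1, false), (0, true), (1, true), (0, true), (1, true), (0, false), (1, false), (0, false), (1, false), (0, true), (1, true), (0, true), (1, true), (0, true), (1, false), (0, false), (1, false), (0, false), (1, true), (0, true), (1, true), (0, true), (1, false), (0, false), (1, false), (0, false), (1, true), (0, true), (1, true), (0, true), (1, true), (0, false), (1, false), (0, false), (1, false), (0, true), (1, true), (0, true), (1, true), (0, false), (1, false), (0, false), (1, false), (0, false), (1, true), (0, true), (1, true), (0, true), (1, false), (0, false), (1, false), (0, false), (1, true), (0, true), (1, true), (0, true), (1, true), (0, false), (1, false), (0, false), (1, false)]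

def conjA2 : Word := [(0, true), (1, true), (0, true), (1, true), (0, false), (1, false), (0, false), (1, false)]

private lemma slope0 : slopeWord (rSlope 0) = uList 43 10 := by
  have h : (rSlope 0).den = 43 ∧ (rSlope 0).num = 10 := by norm_num [rSlope, cf]
  rw [slopeWord, h.1, h.2]
  rfl

private abbrev U0 : FreeGroup (Fin 2) := FreeGroup.mk (uList 43 10)

private def conjC3 : FreeGroup (Fin 2) :=
  (FreeGroup.mk ((invWord (uList 43 10)).take 7))⁻¹

set_option maxRecDepth 100000 in
private lemma key_identity :
    fmap (FreeGroup.mk wWord) * FreeGroup.of 0 =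
      (FreeGroup.mk conjA1 * U0 * (FreeGroup.mk conjA1)⁻¹) *
      (FreeGroup.mk conjA2 * U0 * (FreeGroup.mk conjA2)⁻¹) *
      (conjC3 * U0⁻¹ * conjC3⁻¹) := by
  rw [fmap, FreeGroup.lift_mk]
  decide

private lemma key_mem :
    fmap (FreeGroup.mk wWord) * FreeGroup.of 0 ∈
      Subgroup.normalClosure {FreeGroup.mk (slopeWord (rSlope 0))} := by
  rw [slope0]
  have hu : U0 ∈ Subgroup.normalClosure {U0} := Subgroup.subset_normalClosure rfl
  have hN : (Subgroup.normalClosure {U0}).Normal := Subgroup.normalClosure_normal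
  rw [key_identity]
  exact mul_mem (mul_mem (hN.conj_mem _ hu _) (hN.conj_mem _ hu _))
    (hN.conj_mem _ (inv_mem hu) _)

/-- The composition of `f : a ↦ X⁻¹, b ↦ b⁻¹` with the canonical surjection
`F(a,b) → G₀ = ⟨a,b | u_{r₀}⟩` is surjective. -/
theorem ftilde_surjective :
    Function.Surjective
      ⇑((QuotientGroup.mk'
          (Subgroup.normalClosure {FreeGroup.mk (slopeWord (rSlope 0))})).comp fmap) := by
  set N := Subgroup.normalClosure {FreeGroup.mk (slopeWord (rSlope 0))} with hN
  set F := (QuotientGroup.mk' N).comp fmap with hF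
  have hgen : ∀ i : Fin 2, QuotientGroup.mk' N (FreeGroup.of i) ∈ F.range := by
    intro i
    fin_cases i
    · refine ⟨(FreeGroup.mk wWord)⁻¹, ?_⟩
      have h1 : (QuotientGroup.mk' N) (fmap (FreeGroup.mk wWord)) *
          (QuotientGroup.mk' N) (FreeGroup.of (0 : Fin 2)) = 1 := by
        rw [← map_mul, QuotientGroup.mk'_apply, QuotientGroup.eq_one_iff]
        exact key_mem
      simp only [hF, MonoidHom.comp_apply, map_inv]
      exact inv_eq_of_mul_eq_one_right h1
    · refine ⟨(FreeGroup.of 1)⁻¹, ?_⟩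
      have h2 : fmap ((FreeGroup.of (1 : Fin 2))⁻¹) = FreeGroup.of 1 := by
        rw [map_inv, fmap, FreeGroup.lift_apply_of]
        simp
      simp [hF, h2]
  rw [← MonoidHom.range_eq_top, eq_top_iff]
  rintro g -
  obtain ⟨x, rfl⟩ := QuotientGroup.mk'_surjective N g
  induction x using FreeGroup.induction_on with
  | C1 => simpa using F.range.one_mem
  | of i => exact hgen i
  | inv_of i _ => rw [map_inv]; exact F.range.inv_mem (hgen i)
  | mul x y hx hy => rw [map_mul]; exact F.range.mul_mem hx hy
end
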